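/- arXiv:1901.07616 — 3 statements merged into one kernel-verified Lean document; each statement's English description precedes it below -/
import Mathlib

section
/- Let (V,τ) be an irreducible conic representation of a topological group G that is a factor of some degenerate conic representation of G (i.e., there exists a surjective homomorphism of conic representations from a degenerate conic representation onto (V,τ)). Then (V,τ) is itself degenerate: it admits a G-invariant section. -/
open Set

/-- `Q` is a section of the cone `V`, defined by the continuous conic (additive, positively
homogeneous, nonnegative) function `L`, which is strictly positive away from `0`. -/
structure IsConicSection {X : Type*} [AddCommGroup X] [Module ℝ X] [TopologicalSpace X]
    (V : Set X) (L : X → ℝ) (Q : Set X) : Prop where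
  continuousOn : ContinuousOn L V
  nonneg : ∀ x ∈ V, 0 ≤ L x
  map_add : ∀ x ∈ V, ∀ y ∈ V, L (x + y) = L x + L y
  map_smul : ∀ x ∈ V, ∀ a : ℝ, 0 ≤ a → L (a • x) = a * L x
  pos : ∀ x ∈ V, x ≠ 0 → 0 < L x
  sect_eq : Q = {x ∈ V | L x = 1}

/-- A conic representation of a topological group `G`: a nonzero cone `V` (a subset of a real
topological vector space closed under nonnegative linear combinations) admitting a compact
section, together with a continuous action `τ` of `G` on `V` by maps preserving nonnegative
linear combinations. -/
structure IsConicRep (G : Type*) {X : Type*} [Group G] [TopologicalSpace G]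
    [AddCommGroup X] [Module ℝ X] [TopologicalSpace X]
    (V : Set X) (τ : G → X → X) : Prop where
  nonempty : V.Nonempty
  ne_zero : V ≠ {0}
  cone : ∀ x ∈ V, ∀ y ∈ V, ∀ a b : ℝ, 0 ≤ a → 0 ≤ b → a • x + b • y ∈ V
  mapsTo : ∀ g : G, MapsTo (τ g) V V
  continuousOn : ContinuousOn (fun p : G × X => τ p.1 p.2) (univ ×ˢ V)
  act_one : ∀ x ∈ V, τ 1 x = x
  act_mul : ∀ g h : G, ∀ x ∈ V, τ (g * h) x = τ g (τ h x)
  conic_act : ∀ g : G, ∀ x ∈ V, ∀ y ∈ V, ∀ a b : ℝ, 0 ≤ a → 0 ≤ b →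
    τ g (a • x + b • y) = a • τ g x + b • τ g y
  exists_compact_section : ∃ (L : X → ℝ) (Q : Set X), IsConicSection V L Q ∧ IsCompact Q

/-- A homomorphism of conic representations of `G`: a continuous map preserving nonnegative
linear combinations, vanishing only at `0`, and commuting with the group actions. -/
structure IsConicHom (G : Type*) {X₁ X₂ : Type*} [Group G]
    [AddCommGroup X₁] [Module ℝ X₁] [TopologicalSpace X₁]
    [AddCommGroup X₂] [Module ℝ X₂] [TopologicalSpace X₂]
    (V₁ : Set X₁) (τ : G → X₁ → X₁) (V₂ : Set X₂) (η : G → X₂ → X₂)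
    (φ : X₁ → X₂) : Prop where
  continuousOn : ContinuousOn φ V₁
  mapsTo : MapsTo φ V₁ V₂
  conic : ∀ x ∈ V₁, ∀ y ∈ V₁, ∀ a b : ℝ, 0 ≤ a → 0 ≤ b →
    φ (a • x + b • y) = a • φ x + b • φ y
  ne_zero : ∀ x ∈ V₁, x ≠ 0 → φ x ≠ 0
  equivariant : ∀ g : G, ∀ x ∈ V₁, φ (τ g x) = η g (φ x)

/-- A conic representation is irreducible if its only nonzero closed `G`-invariant subcone
is the whole cone. -/
def IsIrreducibleConicRep (G : Type*) {X : Type*} [Group G]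
    [AddCommGroup X] [Module ℝ X] [TopologicalSpace X]
    (V : Set X) (τ : G → X → X) : Prop :=
  ∀ W : Set X, W ⊆ V → W.Nonempty → W ≠ {0} → IsClosed W →
    (∀ x ∈ W, ∀ y ∈ W, ∀ a b : ℝ, 0 ≤ a → 0 ≤ b → a • x + b • y ∈ W) →
    (∀ g : G, MapsTo (τ g) W W) → W = V

/-- A conic representation is degenerate if it admits a `G`-invariant section. -/
def IsDegenerateConicRep (G : Type*) {X : Type*} [Group G]
    [AddCommGroup X] [Module ℝ X] [TopologicalSpace X]
    (V : Set X) (τ : G → X → X) : Prop :=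
  ∃ (L : X → ℝ) (Q : Set X), IsConicSection V L Q ∧ ∀ g : G, MapsTo (τ g) Q Q


section Aux

open Filter Topology

lemma aux_ultra_real {α : Type*} (U : Ultrafilter α) (f : α → ℝ)
    (h0 : ∀ᶠ y in (U : Filter α), 0 ≤ f y) :
    Filter.Tendsto f U Filter.atTop ∨ ∃ a : ℝ, 0 ≤ a ∧ Filter.Tendsto f U (𝓝 a) := by
  by_cases hb : ∃ n : ℕ, {y | f y ≤ (n : ℝ)} ∈ U
  · right
    obtain ⟨n, hn⟩ := hb
    have hmem : Set.Icc (0 : ℝ) n ∈ (U.map f : Filter ℝ) := by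
      rw [Ultrafilter.coe_map, Filter.mem_map]
      filter_upwards [h0, hn] with y h1 h2
      exact ⟨h1, h2⟩
    obtain ⟨a, ha, hle⟩ := (isCompact_Icc (a := (0 : ℝ)) (b := n)).ultrafilter_le_nhds
      (U.map f) (Filter.le_principal_iff.mpr hmem)
    refine ⟨a, ha.1, ?_⟩
    rwa [Ultrafilter.coe_map] at hle
  · left
    rw [Filter.tendsto_atTop]
    intro b
    obtain ⟨n, hnb⟩ := exists_nat_ge b
    push_neg at hb
    have hc := (Ultrafilter.compl_mem_iff_notMem).2 (hb n)
    filter_upwards [hc] with y hy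
    simp only [Set.mem_compl_iff, Set.mem_setOf_eq, not_le] at hy
    linarith

lemma aux_cone_closed {X : Type*} [AddCommGroup X] [Module ℝ X] [TopologicalSpace X]
    [IsTopologicalAddGroup X] [ContinuousSMul ℝ X] [T2Space X]
    {V : Set X} {L : X → ℝ} {Q : Set X}
    (h0V : (0 : X) ∈ V)
    (hcone : ∀ x ∈ V, ∀ a : ℝ, 0 ≤ a → a • x ∈ V)
    (hs : IsConicSection V L Q) (hQ : IsCompact Q) : IsClosed V := by
  have hL0 : L 0 = 0 := by
    have := hs.map_smul 0 h0V 0 le_rfl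
    simpa using this
  have hQV : Q ⊆ V := by rw [hs.sect_eq]; exact fun x hx => hx.1
  rw [← closure_subset_iff_isClosed]
  intro x hx
  rcases mem_closure_iff_ultrafilter.1 hx with ⟨U, hVU, hUx⟩
  by_cases h0 : {(0 : X)} ∈ U
  · have : x ∈ closure {(0 : X)} := mem_closure_iff_ultrafilter.2 ⟨U, h0, hUx⟩
    rw [closure_singleton, Set.mem_singleton_iff] at this
    rw [this]; exact h0V
  · have hV' : V \ {0} ∈ U := by
      have hsub : V ⊆ (V \ {0}) ∪ {0} := by
        intro y hy; by_cases hy0 : y = 0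
        · exact Or.inr (by simp [hy0])
        · exact Or.inl ⟨hy, hy0⟩
      have := (Ultrafilter.union_mem_iff (f := U)).1 (Filter.mem_of_superset hVU hsub)
      tauto
    set π : X → X := fun y => (L y)⁻¹ • y with hπ
    have hπQ : ∀ y ∈ V \ {0}, π y ∈ Q := by
      intro y hy
      have hLy : 0 < L y := hs.pos y hy.1 hy.2
      have hπV : π y ∈ V := hcone y hy.1 _ (inv_nonneg.2 hLy.le)
      have hLπ : L (π y) = 1 := by
        rw [hπ]; rw [hs.map_smul y hy.1 _ (inv_nonneg.2 hLy.le)]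
        field_simp
      rw [hs.sect_eq]; exact ⟨hπV, hLπ⟩
    have hQmem : Q ∈ (U.map π : Filter X) := by
      rw [Ultrafilter.coe_map, Filter.mem_map]
      filter_upwards [hV'] with y hy using hπQ y hy
    obtain ⟨q, hqQ, hq⟩ := hQ.ultrafilter_le_nhds (U.map π) (Filter.le_principal_iff.mpr hQmem)
    rw [Ultrafilter.coe_map] at hq
    have hqt : Filter.Tendsto π U (𝓝 q) := hq
    have hxt : Filter.Tendsto (fun y : X => y) U (𝓝 x) := hUx
    have h0L : ∀ᶠ y in (U : Filter X), 0 ≤ L y := by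
      filter_upwards [hVU] with y hy using hs.nonneg y hy
    rcases aux_ultra_real U L h0L with ht | ⟨a, ha, hta⟩
    · exfalso
      have hinv : Filter.Tendsto (fun y => (L y)⁻¹) U (𝓝 0) := ht.inv_tendsto_atTop
      have hπ0 : Filter.Tendsto π U (𝓝 ((0 : ℝ) • x)) := hinv.smul hxt
      rw [zero_smul] at hπ0
      have hq0 : q = 0 := tendsto_nhds_unique hqt hπ0
      have : L q = 1 := by rw [hs.sect_eq] at hqQ; exact hqQ.2
      rw [hq0, hL0] at this; norm_num at this
    · have hsm : Filter.Tendsto (fun y => L y • π y) U (𝓝 (a • q)) := hta.smul hqt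
      have heq : ∀ᶠ y in (U : Filter X), L y • π y = y := by
        filter_upwards [hV'] with y hy
        have hLy : 0 < L y := hs.pos y hy.1 hy.2
        rw [hπ, smul_smul, mul_inv_cancel₀ hLy.ne', one_smul]
      have hxa : Filter.Tendsto (fun y : X => y) U (𝓝 (a • q)) := hsm.congr' heq
      have : x = a • q := tendsto_nhds_unique hxt hxa
      rw [this]
      exact hcone q (hQV hqQ) a ha

lemma aux_bounds {X : Type*} [AddCommGroup X] [Module ℝ X] [TopologicalSpace X]
    {V : Set X} {L0 : X → ℝ} {Q0 : Set X}
    (hs : IsConicSection V L0 Q0) (hQ : IsCompact Q0) (hQne : Q0.Nonempty)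
    (f : X → ℝ) (hfc : ContinuousOn f V)
    (hfs : ∀ y ∈ V, ∀ a : ℝ, 0 ≤ a → f (a • y) = a * f y)
    (hfp : ∀ y ∈ V, y ≠ 0 → 0 < f y)
    (hcone : ∀ x ∈ V, ∀ a : ℝ, 0 ≤ a → a • x ∈ V)
    (h0V : (0 : X) ∈ V) :
    ∃ α β : ℝ, 0 < α ∧ 0 < β ∧ ∀ y ∈ V, α * L0 y ≤ f y ∧ f y ≤ β * L0 y := by
  have hQV : Q0 ⊆ V := by rw [hs.sect_eq]; exact fun x hx => hx.1
  have hL00 : L0 0 = 0 := by have := hs.map_smul 0 h0V 0 le_rfl; simpa using this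
  have h0Q : ∀ q ∈ Q0, q ≠ 0 := by
    intro q hq hq0
    rw [hs.sect_eq, hq0] at hq
    have h1 : L0 (0 : X) = 1 := hq.2
    rw [hL00] at h1
    norm_num at h1
  obtain ⟨qm, hqm, hmin⟩ := hQ.exists_isMinOn hQne (hfc.mono hQV)
  obtain ⟨qM, hqM, hmax⟩ := hQ.exists_isMaxOn hQne (hfc.mono hQV)
  refine ⟨f qm, f qM, hfp _ (hQV hqm) (h0Q _ hqm), hfp _ (hQV hqM) (h0Q _ hqM), ?_⟩
  intro y hy
  by_cases hy0 : y = 0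
  · have hf0 : f 0 = 0 := by have := hfs 0 h0V 0 le_rfl; simpa using this
    rw [hy0, hf0, hL00]; simp
  · have hLy : 0 < L0 y := hs.pos y hy hy0
    set q : X := (L0 y)⁻¹ • y with hqdef
    have hqV : q ∈ V := hcone y hy _ (inv_nonneg.2 hLy.le)
    have hqQ : q ∈ Q0 := by
      rw [hs.sect_eq]
      refine ⟨hqV, ?_⟩
      rw [hqdef, hs.map_smul y hy _ (inv_nonneg.2 hLy.le)]
      field_simp
    have hyq : y = L0 y • q := by
      rw [hqdef, smul_smul, mul_inv_cancel₀ hLy.ne', one_smul]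
    have hfy : f y = L0 y * f q := by
      conv_lhs => rw [hyq]
      exact hfs q hqV _ hLy.le
    constructor
    · rw [hfy, mul_comm (f qm)]
      exact mul_le_mul_of_nonneg_left (hmin hqQ) hLy.le
    · rw [hfy, mul_comm (f qM)]
      exact mul_le_mul_of_nonneg_left (hmax hqQ) hLy.le

end Aux

open Filter Topology

set_option maxHeartbeats 1600000

/-- Let `(V,τ)` be an irreducible conic representation of a topological
group `G` that is a factor of some degenerate conic representation of `G` (i.e. there exists a
surjective homomorphism of conic representations from a degenerate conic representation
`(V',η)` onto `(V,τ)`).  Then `(V,τ)` is itself degenerate: it admits a `G`-invariant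
section. -/
theorem stmt_17 {G X' X : Type*} [Group G] [TopologicalSpace G] [IsTopologicalGroup G]
    [AddCommGroup X'] [Module ℝ X'] [TopologicalSpace X']
    [IsTopologicalAddGroup X'] [ContinuousSMul ℝ X'] [T2Space X'] [SeparatingDual ℝ X']
    [AddCommGroup X] [Module ℝ X] [TopologicalSpace X]
    [IsTopologicalAddGroup X] [ContinuousSMul ℝ X] [T2Space X] [SeparatingDual ℝ X]
    (V : Set X) (τ : G → X → X) (hrep : IsConicRep G V τ)
    (hirr : IsIrreducibleConicRep G V τ)
    (V' : Set X') (η : G → X' → X') (hrep' : IsConicRep G V' η)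
    (hdeg' : IsDegenerateConicRep G V' η)
    (φ : X' → X) (hφ : IsConicHom G V' η V τ φ) (hφsurj : φ '' V' = V) :
    IsDegenerateConicRep G V τ := by
  classical
  obtain ⟨L₀, Q₀, hs₀, hQ₀⟩ := hrep.exists_compact_section
  obtain ⟨L₀', Q₀', hs₀', hQ₀'⟩ := hrep'.exists_compact_section
  obtain ⟨L', Q', hs', hQ'inv⟩ := hdeg'
  have h0V : (0 : X) ∈ V := by
    obtain ⟨x, hx⟩ := hrep.nonempty
    have := hrep.cone x hx x hx 0 0 le_rfl le_rfl
    simpa using this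
  have h0V' : (0 : X') ∈ V' := by
    obtain ⟨y, hy⟩ := hrep'.nonempty
    have := hrep'.cone y hy y hy 0 0 le_rfl le_rfl
    simpa using this
  have hconeV : ∀ x ∈ V, ∀ a : ℝ, 0 ≤ a → a • x ∈ V := by
    intro x hx a ha
    have := hrep.cone x hx x hx a 0 ha le_rfl
    simpa using this
  have hconeV' : ∀ y ∈ V', ∀ a : ℝ, 0 ≤ a → a • y ∈ V' := by
    intro y hy a ha
    have := hrep'.cone y hy y hy a 0 ha le_rfl
    simpa using this
  have haddV : ∀ x ∈ V, ∀ y ∈ V, x + y ∈ V := by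
    intro x hx y hy
    have := hrep.cone x hx y hy 1 1 zero_le_one zero_le_one
    simpa using this
  have hVclosed : IsClosed V := aux_cone_closed h0V hconeV hs₀ hQ₀
  have hL₀0 : L₀ (0 : X) = 0 := by
    have := hs₀.map_smul 0 h0V 0 le_rfl; simpa using this
  have hQ'V' : Q' ⊆ V' := by rw [hs'.sect_eq]; exact fun y hy => hy.1
  have hexV : ∃ x ∈ V, x ≠ 0 := by
    by_contra h
    push_neg at h
    exact hrep.ne_zero (Subset.antisymm (fun x hx => h x hx) (fun x hx => by
      rw [mem_singleton_iff] at hx; rw [hx]; exact h0V))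
  have hexV' : ∃ y ∈ V', y ≠ 0 := by
    by_contra h
    push_neg at h
    exact hrep'.ne_zero (Subset.antisymm (fun y hy => h y hy) (fun y hy => by
      rw [mem_singleton_iff] at hy; rw [hy]; exact h0V'))
  have hQ₀'ne : Q₀'.Nonempty := by
    obtain ⟨y, hy, hy0⟩ := hexV'
    have hLy : 0 < L₀' y := hs₀'.pos y hy hy0
    refine ⟨(L₀' y)⁻¹ • y, ?_⟩
    rw [hs₀'.sect_eq]
    refine ⟨hconeV' y hy _ (inv_nonneg.2 hLy.le), ?_⟩
    rw [hs₀'.map_smul y hy _ (inv_nonneg.2 hLy.le)]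
    field_simp
  obtain ⟨α, β, hα, hβ, hαβ⟩ := aux_bounds hs₀' hQ₀' hQ₀'ne L' hs'.continuousOn
    (fun y hy a ha => hs'.map_smul y hy a ha) hs'.pos hconeV' h0V'
  have hφs : ∀ y ∈ V', ∀ a : ℝ, 0 ≤ a → φ (a • y) = a • φ y := by
    intro y hy a ha
    have := hφ.conic y hy y hy a 0 ha le_rfl
    simpa using this
  obtain ⟨c, C, hc, hC, hcC⟩ := aux_bounds hs₀' hQ₀' hQ₀'ne (fun y => L₀ (φ y))
    (hs₀.continuousOn.comp hφ.continuousOn hφ.mapsTo)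
    (fun y hy a ha => by
      rw [hφs y hy a ha, hs₀.map_smul _ (hφ.mapsTo hy) a ha])
    (fun y hy hy0 => hs₀.pos _ (hφ.mapsTo hy) (hφ.ne_zero y hy hy0)) hconeV' h0V'
  set a₀ : ℝ := α / C with ha₀def
  set b₀ : ℝ := β / c with hb₀def
  have ha₀ : 0 < a₀ := div_pos hα hC
  have hb₀ : 0 < b₀ := div_pos hβ hc
  set S : Set (X × ℝ) := {p | p.1 ∈ V ∧ a₀ * L₀ p.1 ≤ p.2 ∧ p.2 ≤ b₀ * L₀ p.1} with hSdef
  have hL₀fst : ContinuousOn (fun p : X × ℝ => L₀ p.1) (V ×ˢ (univ : Set ℝ)) :=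
    hs₀.continuousOn.comp continuous_fst.continuousOn (fun p hp => hp.1)
  have hSclosed : IsClosed S := by
    have h1 : S = (V ×ˢ (univ : Set ℝ)) ∩
        ((fun p : X × ℝ => (p.2 - a₀ * L₀ p.1, b₀ * L₀ p.1 - p.2)) ⁻¹'
          (Ici (0:ℝ) ×ˢ Ici (0:ℝ))) := by
      ext p
      simp only [hSdef, mem_setOf_eq, mem_inter_iff, mem_prod, mem_preimage, mem_Ici,
        mem_univ, and_true]
      constructor
      · rintro ⟨h1, h2, h3⟩; exact ⟨h1, by linarith, by linarith⟩
      · rintro ⟨h1, h2, h3⟩; exact ⟨h1, by linarith, by linarith⟩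
    rw [h1]
    refine ContinuousOn.preimage_isClosed_of_isClosed ?_ (hVclosed.prod isClosed_univ)
      (isClosed_Ici.prod isClosed_Ici)
    exact (continuous_snd.continuousOn.sub (continuousOn_const.mul hL₀fst)).prodMk
      ((continuousOn_const.mul hL₀fst).sub continuous_snd.continuousOn)
  set Λ : Set (X × ℝ) := (fun y => (φ y, L' y)) '' V' with hΛdef
  have hΛS : Λ ⊆ S := by
    rintro _ ⟨y, hy, rfl⟩
    have h1 := (hαβ y hy).1
    have h2 := (hαβ y hy).2
    have h3 := (hcC y hy).1
    have h4 := (hcC y hy).2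
    refine ⟨hφ.mapsTo hy, ?_, ?_⟩
    · have h5 : a₀ * L₀ (φ y) ≤ a₀ * (C * L₀' y) :=
        mul_le_mul_of_nonneg_left h4 ha₀.le
      have h6 : a₀ * (C * L₀' y) = α * L₀' y := by
        rw [ha₀def]; field_simp
      calc a₀ * L₀ ((fun y => (φ y, L' y)) y).1 = a₀ * L₀ (φ y) := rfl
        _ ≤ a₀ * (C * L₀' y) := h5
        _ = α * L₀' y := h6
        _ ≤ L' y := h1
    · have h5 : b₀ * (c * L₀' y) = β * L₀' y := by
        rw [hb₀def]; field_simp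
      have h6 : b₀ * (c * L₀' y) ≤ b₀ * L₀ (φ y) :=
        mul_le_mul_of_nonneg_left h3 hb₀.le
      calc ((fun y => (φ y, L' y)) y).2 = L' y := rfl
        _ ≤ β * L₀' y := h2
        _ = b₀ * (c * L₀' y) := h5.symm
        _ ≤ b₀ * L₀ (φ y) := h6
  have hΛcone : ∀ p ∈ Λ, ∀ q ∈ Λ, ∀ a b : ℝ, 0 ≤ a → 0 ≤ b → a • p + b • q ∈ Λ := by
    rintro _ ⟨y, hy, rfl⟩ _ ⟨z, hz, rfl⟩ a b ha hb
    refine ⟨a • y + b • z, hrep'.cone y hy z hz a b ha hb, ?_⟩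
    have hay : a • y ∈ V' := hconeV' y hy a ha
    have hbz : b • z ∈ V' := hconeV' z hz b hb
    have h1 : φ (a • y + b • z) = a • φ y + b • φ z := hφ.conic y hy z hz a b ha hb
    have h2 : L' (a • y + b • z) = a * L' y + b * L' z := by
      rw [hs'.map_add _ hay _ hbz, hs'.map_smul y hy a ha, hs'.map_smul z hz b hb]
    rw [Prod.ext_iff]
    constructor
    · simpa using h1
    · simpa [smul_eq_mul] using h2
  set T : G → (X × ℝ) → (X × ℝ) := fun g p => (τ g p.1, p.2) with hTdef
  have hη0 : ∀ g : G, η g 0 = 0 := by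
    intro g
    have := hrep'.conic_act g 0 h0V' 0 h0V' 0 0 le_rfl le_rfl
    simpa using this
  have hηs : ∀ g : G, ∀ y ∈ V', ∀ a : ℝ, 0 ≤ a → η g (a • y) = a • η g y := by
    intro g y hy a ha
    have := hrep'.conic_act g y hy y hy a 0 ha le_rfl
    simpa using this
  have hL'inv : ∀ g : G, ∀ y ∈ V', L' (η g y) = L' y := by
    intro g y hy
    by_cases hy0 : y = 0
    · rw [hy0, hη0 g]
    · have hLy : 0 < L' y := hs'.pos y hy hy0
      set q : X' := (L' y)⁻¹ • y with hqdef
      have hqV : q ∈ V' := hconeV' y hy _ (inv_nonneg.2 hLy.le)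
      have hqQ : q ∈ Q' := by
        rw [hs'.sect_eq]
        refine ⟨hqV, ?_⟩
        rw [hqdef, hs'.map_smul y hy _ (inv_nonneg.2 hLy.le)]
        field_simp
      have hyq : y = L' y • q := by
        rw [hqdef, smul_smul, mul_inv_cancel₀ hLy.ne', one_smul]
      have hgq : η g q ∈ Q' := hQ'inv g hqQ
      have hgqV : η g q ∈ V' := hQ'V' hgq
      have hgq1 : L' (η g q) = 1 := by rw [hs'.sect_eq] at hgq; exact hgq.2
      calc L' (η g y) = L' (η g (L' y • q)) := by rw [← hyq]
        _ = L' (L' y • η g q) := by rw [hηs g q hqV _ hLy.le]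
        _ = L' y * L' (η g q) := hs'.map_smul _ hgqV _ hLy.le
        _ = L' y := by rw [hgq1, mul_one]
  have hΛinv : ∀ g : G, MapsTo (T g) Λ Λ := by
    rintro g _ ⟨y, hy, rfl⟩
    refine ⟨η g y, hrep'.mapsTo g hy, ?_⟩
    show (φ (η g y), L' (η g y)) = (τ g (φ y), L' y)
    rw [hφ.equivariant g y hy, hL'inv g y hy]
  have hτgc : ∀ g : G, ContinuousOn (τ g) V := by
    intro g
    have h1 : ContinuousOn (fun x : X => ((g, x) : G × X)) V :=
      (continuous_const.prodMk continuous_id).continuousOn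
    exact hrep.continuousOn.comp h1 (fun x hx => ⟨mem_univ _, hx⟩)
  have hTc : ∀ g : G, ContinuousOn (T g) (V ×ˢ (univ : Set ℝ)) := by
    intro g
    exact ((hτgc g).comp continuous_fst.continuousOn (fun p hp => hp.1)).prodMk
      continuous_snd.continuousOn
  set Λb : Set (X × ℝ) := closure Λ with hΛbdef
  have hΛbS : Λb ⊆ S := closure_minimal hΛS hSclosed
  have hΛbsub : Λb ⊆ V ×ˢ (univ : Set ℝ) := fun p hp => ⟨(hΛbS hp).1, mem_univ _⟩
  have hΛbcone : ∀ p ∈ Λb, ∀ q ∈ Λb, ∀ a b : ℝ, 0 ≤ a → 0 ≤ b → a • p + b • q ∈ Λb := by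
    intro p hp q hq a b ha hb
    have hmemc : (p, q) ∈ closure (Λ ×ˢ Λ) := by
      rw [closure_prod_eq]; exact ⟨hp, hq⟩
    have hFc : Continuous (fun r : (X × ℝ) × (X × ℝ) => a • r.1 + b • r.2) :=
      (continuous_fst.const_smul a).add (continuous_snd.const_smul b)
    have himg : (fun r : (X × ℝ) × (X × ℝ) => a • r.1 + b • r.2) '' closure (Λ ×ˢ Λ) ⊆
        closure ((fun r : (X × ℝ) × (X × ℝ) => a • r.1 + b • r.2) '' (Λ ×ˢ Λ)) :=
      image_closure_subset_closure_image hFc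
    have hsub2 : (fun r : (X × ℝ) × (X × ℝ) => a • r.1 + b • r.2) '' (Λ ×ˢ Λ) ⊆ Λ := by
      rintro _ ⟨⟨u, v⟩, ⟨hu, hv⟩, rfl⟩
      exact hΛcone u hu v hv a b ha hb
    exact closure_mono hsub2 (himg ⟨(p, q), hmemc, rfl⟩)
  have hΛbinv : ∀ g : G, MapsTo (T g) Λb Λb := by
    intro g
    have h1 : ContinuousOn (T g) (closure Λ) := (hTc g).mono hΛbsub
    intro p hp
    have h3 := h1.image_closure ⟨p, hp, rfl⟩
    exact closure_mono ((hΛinv g).image_subset) h3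
  have hSzero : ∀ p ∈ S, p.1 = 0 → p = 0 := by
    intro p hp h1
    have h2 := hp.2.1
    have h3 := hp.2.2
    rw [h1, hL₀0] at h2 h3
    simp only [mul_zero] at h2 h3
    have h4 : p.2 = 0 := le_antisymm h3 h2
    rw [Prod.ext_iff]
    exact ⟨h1, h4⟩
  have hSfst : ∀ p ∈ S, p ≠ 0 → p.1 ≠ 0 := fun p hp hp0 h1 => hp0 (hSzero p hp h1)
  set Lt : X × ℝ → ℝ := fun p => L₀ p.1 + p.2 with hLtdef
  have hLtc : ContinuousOn Lt (V ×ˢ (univ : Set ℝ)) := hL₀fst.add continuous_snd.continuousOn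
  set Qt : Set (X × ℝ) := {p ∈ Λb | Lt p = 1} with hQtdef
  have hQtclosed : IsClosed Qt := by
    have h1 : Qt = Λb ∩ Lt ⁻¹' {1} := by
      ext p
      constructor
      · intro hp; exact ⟨hp.1, hp.2⟩
      · intro hp; exact ⟨hp.1, hp.2⟩
    rw [h1]
    exact ContinuousOn.preimage_isClosed_of_isClosed (hLtc.mono hΛbsub)
      isClosed_closure isClosed_singleton
  have hK₁ : IsCompact ((fun r : ℝ × X => r.1 • r.2) '' (Icc (0:ℝ) 1 ×ˢ Q₀) ∪ {0}) :=
    ((isCompact_Icc.prod hQ₀).image continuous_smul).union isCompact_singleton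
  have hK₁mem : ∀ x ∈ V, L₀ x ≤ 1 →
      x ∈ (fun r : ℝ × X => r.1 • r.2) '' (Icc (0:ℝ) 1 ×ˢ Q₀) ∪ {0} := by
    intro x hx hx1
    by_cases hx0 : x = 0
    · right; simp [hx0]
    · left
      have hLx : 0 < L₀ x := hs₀.pos x hx hx0
      refine ⟨(L₀ x, (L₀ x)⁻¹ • x), ⟨⟨hLx.le, hx1⟩, ?_⟩, ?_⟩
      · rw [hs₀.sect_eq]
        refine ⟨hconeV x hx _ (inv_nonneg.2 hLx.le), ?_⟩
        rw [hs₀.map_smul x hx _ (inv_nonneg.2 hLx.le)]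
        field_simp
      · show L₀ x • (L₀ x)⁻¹ • x = x
        rw [smul_smul, mul_inv_cancel₀ hLx.ne', one_smul]
  have hQtcomp : IsCompact Qt := by
    apply IsCompact.of_isClosed_subset
      ((hK₁.prod (isCompact_Icc (a := (0:ℝ)) (b := 1)))) hQtclosed
    intro p hp
    have hpS := hΛbS hp.1
    have h2 : 0 ≤ p.2 := le_trans (mul_nonneg ha₀.le (hs₀.nonneg _ hpS.1)) hpS.2.1
    have h0L : 0 ≤ L₀ p.1 := hs₀.nonneg _ hpS.1
    have hsum : L₀ p.1 + p.2 = 1 := hp.2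
    have hL1 : L₀ p.1 ≤ 1 := by linarith
    have h4 : p.2 ≤ 1 := by linarith
    exact ⟨hK₁mem p.1 hpS.1 hL1, h2, h4⟩
  set P : Set (Set (X × ℝ)) := {Y | Y ⊆ Λb ∧ IsClosed Y ∧
      (∀ p ∈ Y, ∀ q ∈ Y, ∀ a b : ℝ, 0 ≤ a → 0 ≤ b → a • p + b • q ∈ Y) ∧
      (∀ g : G, MapsTo (T g) Y Y) ∧ ∃ p ∈ Y, p ≠ 0} with hPdef
  have hscale : ∀ Y ∈ P, (Y ∩ Qt).Nonempty := by
    intro Y hY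
    obtain ⟨hYΛb, hYcl, hYcone, hYinv, p, hpY, hp0⟩ := hY
    have hpS : p ∈ S := hΛbS (hYΛb hpY)
    have hp1 : p.1 ≠ 0 := hSfst p hpS hp0
    have hLtp : 0 < Lt p := by
      have h1 : 0 < L₀ p.1 := hs₀.pos _ hpS.1 hp1
      have h2 : 0 ≤ p.2 := le_trans (mul_nonneg ha₀.le (hs₀.nonneg _ hpS.1)) hpS.2.1
      show 0 < L₀ p.1 + p.2
      linarith
    have hmem : (Lt p)⁻¹ • p ∈ Y := by
      have := hYcone p hpY p hpY (Lt p)⁻¹ 0 (inv_nonneg.2 hLtp.le) le_rfl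
      simpa using this
    refine ⟨(Lt p)⁻¹ • p, hmem, hYΛb hmem, ?_⟩
    show L₀ ((Lt p)⁻¹ • p).1 + ((Lt p)⁻¹ • p).2 = 1
    have e1 : ((Lt p)⁻¹ • p).1 = (Lt p)⁻¹ • p.1 := rfl
    have e2 : ((Lt p)⁻¹ • p).2 = (Lt p)⁻¹ * p.2 := rfl
    rw [e1, e2, hs₀.map_smul _ hpS.1 _ (inv_nonneg.2 hLtp.le), ← mul_add]
    show (Lt p)⁻¹ * Lt p = 1
    exact inv_mul_cancel₀ hLtp.ne'
  have hΛbP : Λb ∈ P := by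
    refine ⟨Subset.rfl, isClosed_closure, hΛbcone, hΛbinv, ?_⟩
    obtain ⟨x, hx, hx0⟩ := hexV
    have hx' : x ∈ φ '' V' := by rw [hφsurj]; exact hx
    obtain ⟨y, hy, rfl⟩ := hx'
    exact ⟨(φ y, L' y), subset_closure ⟨y, hy, rfl⟩,
      fun h => hx0 (by simpa using congrArg Prod.fst h)⟩
  have hzorn : ∃ m, m ⊆ Λb ∧ Minimal (· ∈ P) m := by
    apply zorn_superset_nonempty P ?_ Λb hΛbP
    intro ch hchP hchain hchne
    obtain ⟨Y₀, hY₀⟩ := hchne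
    refine ⟨⋂₀ ch, ?_, fun s hs => sInter_subset_of_mem hs⟩
    refine ⟨(sInter_subset_of_mem hY₀).trans (hchP hY₀).1, ?_, ?_, ?_, ?_⟩
    · exact isClosed_sInter (fun Y hY => (hchP hY).2.1)
    · intro p hp q hq a b ha hb
      rw [mem_sInter] at hp hq ⊢
      intro Y hY
      exact (hchP hY).2.2.1 p (hp Y hY) q (hq Y hY) a b ha hb
    · intro g p hp
      rw [mem_sInter] at hp ⊢
      intro Y hY
      exact (hchP hY).2.2.2.1 g (hp Y hY)
    · have hne : (⋂ Y : ch, ((Y : Set (X × ℝ)) ∩ Qt)).Nonempty := by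
        haveI : Nonempty ch := ⟨⟨Y₀, hY₀⟩⟩
        apply IsCompact.nonempty_iInter_of_directed_nonempty_isCompact_isClosed
        · intro i j
          rcases hchain.total i.2 j.2 with h | h
          · exact ⟨i, Subset.rfl, inter_subset_inter_left _ h⟩
          · exact ⟨j, inter_subset_inter_left _ h, Subset.rfl⟩
        · intro i; exact hscale i (hchP i.2)
        · intro i
          exact hQtcomp.of_isClosed_subset ((hchP i.2).2.1.inter hQtclosed) inter_subset_right
        · intro i; exact (hchP i.2).2.1.inter hQtclosed
      obtain ⟨p, hp⟩ := hne
      rw [mem_iInter] at hp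
      have hpQt : p ∈ Qt := (hp ⟨Y₀, hY₀⟩).2
      have hp0 : p ≠ 0 := by
        intro h
        have h1 : Lt p = 1 := hpQt.2
        have hLt0 : Lt (0 : X × ℝ) = 0 := by
          show L₀ (0 : X × ℝ).1 + (0 : X × ℝ).2 = 0
          rw [Prod.fst_zero, Prod.snd_zero, hL₀0, add_zero]
        rw [h, hLt0] at h1
        norm_num at h1
      refine ⟨p, ?_, hp0⟩
      rw [mem_sInter]
      intro Y hY
      exact (hp ⟨Y, hY⟩).1
  obtain ⟨Λm, -, hΛmmin⟩ := hzorn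
  obtain ⟨hΛmΛb, hΛmcl, hΛmcone, hΛminv, p₀, hp₀Λm, hp₀0⟩ := hΛmmin.1
  have hΛmS : Λm ⊆ S := hΛmΛb.trans hΛbS
  have h0Λm : (0 : X × ℝ) ∈ Λm := by
    have := hΛmcone p₀ hp₀Λm p₀ hp₀Λm 0 0 le_rfl le_rfl
    simpa using this
  set W : Set X := Prod.fst '' Λm with hWdef
  have hWV : W ⊆ V := by rintro _ ⟨p, hp, rfl⟩; exact (hΛmS hp).1
  have hWcone : ∀ x ∈ W, ∀ y ∈ W, ∀ a b : ℝ, 0 ≤ a → 0 ≤ b → a • x + b • y ∈ W := by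
    rintro _ ⟨p, hp, rfl⟩ _ ⟨q, hq, rfl⟩ a b ha hb
    exact ⟨a • p + b • q, hΛmcone p hp q hq a b ha hb, rfl⟩
  have h0W : (0 : X) ∈ W := ⟨0, h0Λm, rfl⟩
  have hWne : W ≠ {0} := by
    intro h
    have hmem : p₀.1 ∈ W := ⟨p₀, hp₀Λm, rfl⟩
    rw [h, mem_singleton_iff] at hmem
    exact hSfst p₀ (hΛmS hp₀Λm) hp₀0 hmem
  have hQW : {x ∈ W | L₀ x = 1} = Prod.fst '' (Λm ∩ (fun p : X × ℝ => L₀ p.1) ⁻¹' {1}) := by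
    ext x
    constructor
    · rintro ⟨⟨p, hp, rfl⟩, h1⟩; exact ⟨p, ⟨hp, h1⟩, rfl⟩
    · rintro ⟨p, ⟨hp, h1⟩, rfl⟩; exact ⟨⟨p, hp, rfl⟩, h1⟩
  have hR₁cl : IsClosed (Λm ∩ (fun p : X × ℝ => L₀ p.1) ⁻¹' {1}) :=
    ContinuousOn.preimage_isClosed_of_isClosed (hL₀fst.mono (hΛmΛb.trans hΛbsub))
      hΛmcl isClosed_singleton
  have hR₁comp : IsCompact (Λm ∩ (fun p : X × ℝ => L₀ p.1) ⁻¹' {1}) := by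
    apply IsCompact.of_isClosed_subset (hQ₀.prod (isCompact_Icc (a := (0:ℝ)) (b := b₀))) hR₁cl
    rintro p ⟨hp, h1⟩
    have hpS := hΛmS hp
    simp only [mem_preimage, mem_singleton_iff] at h1
    refine ⟨?_, ?_, ?_⟩
    · rw [hs₀.sect_eq]; exact ⟨hpS.1, h1⟩
    · exact le_trans (mul_nonneg ha₀.le (hs₀.nonneg _ hpS.1)) hpS.2.1
    · have h3 := hpS.2.2
      rw [h1, mul_one] at h3
      exact h3
  have hQWcomp : IsCompact {x ∈ W | L₀ x = 1} := by
    rw [hQW]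
    exact hR₁comp.image continuous_fst
  have hWsec : IsConicSection W L₀ {x ∈ W | L₀ x = 1} :=
    ⟨hs₀.continuousOn.mono hWV, fun x hx => hs₀.nonneg x (hWV hx),
     fun x hx y hy => hs₀.map_add x (hWV hx) y (hWV hy),
     fun x hx a ha => hs₀.map_smul x (hWV hx) a ha,
     fun x hx h => hs₀.pos x (hWV hx) h, rfl⟩
  have hWsmul : ∀ x ∈ W, ∀ a : ℝ, 0 ≤ a → a • x ∈ W := by
    intro x hx a ha
    have := hWcone x hx x hx a 0 ha le_rfl
    simpa using this
  have hWclosed : IsClosed W := aux_cone_closed h0W hWsmul hWsec hQWcomp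
  have hWinv : ∀ g : G, MapsTo (τ g) W W := by
    rintro g _ ⟨p, hp, rfl⟩
    exact ⟨T g p, hΛminv g hp, rfl⟩
  have hWV' : W = V := hirr W hWV ⟨0, h0W⟩ hWne hWclosed hWcone hWinv
  have hfib_ex : ∀ x ∈ V, ∃ t : ℝ, (x, t) ∈ Λm := by
    intro x hx
    rw [← hWV'] at hx
    obtain ⟨p, hp, rfl⟩ := hx
    exact ⟨p.2, by simpa using hp⟩
  have hkey : ∀ r : ℝ, 1 < r → ∀ p ∈ Λm, (p.1, r * p.2) ∈ Λm → p = 0 := by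
    intro r hr p hp hrp
    by_contra hp0
    set Y : Set (X × ℝ) := Λm ∩ (fun q : X × ℝ => (q.1, r * q.2)) ⁻¹' Λm with hYdef
    have hYP : Y ∈ P := by
      refine ⟨inter_subset_left.trans hΛmΛb, ?_, ?_, ?_, ⟨p, ⟨hp, hrp⟩, hp0⟩⟩
      · exact hΛmcl.inter (hΛmcl.preimage (continuous_fst.prodMk (continuous_const.mul continuous_snd)))
      · intro u hu v hv a b ha hb
        refine ⟨hΛmcone u hu.1 v hv.1 a b ha hb, ?_⟩
        have h1 : ((a • u + b • v).1, r * (a • u + b • v).2)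
            = a • (u.1, r * u.2) + b • (v.1, r * v.2) := by
          rw [Prod.ext_iff]
          constructor
          · simp
          · simp [smul_eq_mul]; ring
        simp only [mem_preimage]
        rw [h1]
        exact hΛmcone _ hu.2 _ hv.2 a b ha hb
      · intro g q hq
        refine ⟨hΛminv g hq.1, ?_⟩
        simp only [mem_preimage]
        have h1 : ((T g q).1, r * (T g q).2) = T g (q.1, r * q.2) := rfl
        rw [h1]
        exact hΛminv g hq.2
    have hYeq : Y = Λm := Subset.antisymm inter_subset_left (hΛmmin.2 hYP inter_subset_left)
    have hiter : ∀ n : ℕ, (p.1, r ^ n * p.2) ∈ Λm := by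
      intro n
      induction n with
      | zero => simpa using hp
      | succ n ih =>
        have hY : (p.1, r ^ n * p.2) ∈ Y := by rw [hYeq]; exact ih
        have h2 := hY.2
        simp only [mem_preimage] at h2
        have h3 : r * (r ^ n * p.2) = r ^ (n + 1) * p.2 := by ring
        rwa [h3] at h2
    have hpS := hΛmS hp
    have hp1 : p.1 ≠ 0 := hSfst p hpS hp0
    have hp2 : 0 < p.2 := lt_of_lt_of_le (mul_pos ha₀ (hs₀.pos _ hpS.1 hp1)) hpS.2.1
    obtain ⟨n, hn⟩ := pow_unbounded_of_one_lt ((b₀ * L₀ p.1) / p.2) hr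
    have h3 : r ^ n * p.2 ≤ b₀ * L₀ p.1 := (hΛmS (hiter n)).2.2
    have h4 : (b₀ * L₀ p.1) / p.2 * p.2 < r ^ n * p.2 := mul_lt_mul_of_pos_right hn hp2
    rw [div_mul_cancel₀ _ hp2.ne'] at h4
    linarith
  have hfib_uniq : ∀ x ∈ V, ∀ t t' : ℝ, (x, t) ∈ Λm → (x, t') ∈ Λm → t = t' := by
    have main : ∀ x ∈ V, ∀ t t' : ℝ, (x, t) ∈ Λm → (x, t') ∈ Λm → t' < t → False := by
      intro x hx t t' h1 h2 hlt
      by_cases hx0 : x = 0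
      · have e1 : ((x, t) : X × ℝ) = 0 := hSzero _ (hΛmS h1) hx0
        have e2 : ((x, t') : X × ℝ) = 0 := hSzero _ (hΛmS h2) hx0
        have e3 : t = 0 := by simpa using congrArg Prod.snd e1
        have e4 : t' = 0 := by simpa using congrArg Prod.snd e2
        rw [e3, e4] at hlt
        exact lt_irrefl 0 hlt
      · have hpS' := hΛmS h2
        have ht' : 0 < t' :=
          lt_of_lt_of_le (mul_pos ha₀ (hs₀.pos _ hpS'.1 hx0)) hpS'.2.1
        have hr : 1 < t / t' := (one_lt_div ht').2 hlt
        have hrt : t / t' * t' = t := div_mul_cancel₀ t ht'.ne'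
        have hres := hkey (t / t') hr (x, t') h2 (by
          show (x, t / t' * t') ∈ Λm
          rw [hrt]
          exact h1)
        exact hx0 (by simpa using congrArg Prod.fst hres)
    intro x hx t t' h1 h2
    rcases lt_trichotomy t t' with h | h | h
    · exact (main x hx t' t h2 h1 h).elim
    · exact h
    · exact (main x hx t t' h1 h2 h).elim
  set L : X → ℝ := fun x => sInf {t : ℝ | (x, t) ∈ Λm} with hLdef
  have hLspec : ∀ x ∈ V, (x, L x) ∈ Λm ∧ ∀ t : ℝ, (x, t) ∈ Λm → t = L x := by
    intro x hx
    obtain ⟨t₀, ht₀⟩ := hfib_ex x hx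
    have hset : {t : ℝ | (x, t) ∈ Λm} = {t₀} := by
      ext t
      simp only [mem_setOf_eq, mem_singleton_iff]
      exact ⟨fun h => hfib_uniq x hx t t₀ h ht₀, fun h => h ▸ ht₀⟩
    have hLx : L x = t₀ := by
      show sInf {t : ℝ | (x, t) ∈ Λm} = t₀
      rw [hset, csInf_singleton]
    rw [hLx]
    exact ⟨ht₀, fun t ht => hfib_uniq x hx t t₀ ht ht₀⟩
  have hLS : ∀ x ∈ V, a₀ * L₀ x ≤ L x ∧ L x ≤ b₀ * L₀ x := by
    intro x hx
    have h := hΛmS (hLspec x hx).1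
    exact ⟨h.2.1, h.2.2⟩
  refine ⟨L, {x ∈ V | L x = 1}, ⟨?_, ?_, ?_, ?_, ?_, rfl⟩, ?_⟩
  · -- continuity
    intro x hx
    have hLx := hLspec x hx
    show Filter.Tendsto L (nhdsWithin x V) (𝓝 (L x))
    rw [Filter.tendsto_iff_ultrafilter]
    intro U hU
    have hVU : V ∈ U := hU self_mem_nhdsWithin
    have hxlim : Filter.Tendsto (fun y : X => y) (U : Filter X) (𝓝 x) :=
      tendsto_id.mono_right (hU.trans nhdsWithin_le_nhds)
    have hL₀lim : Filter.Tendsto L₀ (U : Filter X) (𝓝 (L₀ x)) :=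
      (hs₀.continuousOn x hx).mono_left hU
    have hb1 : ∀ᶠ y in (U : Filter X), L₀ y < L₀ x + 1 :=
      hL₀lim.eventually_lt_const (lt_add_one _)
    have hbound : {y : X | L y ∈ Icc (0:ℝ) (b₀ * (L₀ x + 1))} ∈ U := by
      have := Filter.inter_mem hb1 hVU
      refine Filter.mem_of_superset this ?_
      rintro y ⟨h2, hyV⟩
      have hB := hLS y hyV
      have h0 : 0 ≤ L₀ y := hs₀.nonneg y hyV
      constructor
      · exact le_trans (mul_nonneg ha₀.le h0) hB.1
      · exact le_trans hB.2 (mul_le_mul_of_nonneg_left (le_of_lt h2) hb₀.le)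
    have hmap : Icc (0:ℝ) (b₀ * (L₀ x + 1)) ∈ (U.map L : Filter ℝ) := by
      rw [Ultrafilter.coe_map, Filter.mem_map]
      exact hbound
    obtain ⟨s, -, hs⟩ := isCompact_Icc.ultrafilter_le_nhds (U.map L)
      (Filter.le_principal_iff.mpr hmap)
    rw [Ultrafilter.coe_map] at hs
    have hslim : Filter.Tendsto L (U : Filter X) (𝓝 s) := hs
    have hgr : Filter.Tendsto (fun y => (y, L y)) (U : Filter X) (𝓝 (x, s)) :=
      hxlim.prodMk_nhds hslim
    have hmemΛ : ∀ᶠ y in (U : Filter X), (y, L y) ∈ Λm := by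
      refine Filter.mem_of_superset hVU ?_
      intro y hy
      exact (hLspec y hy).1
    have hxs : (x, s) ∈ Λm := hΛmcl.mem_of_tendsto hgr hmemΛ
    have hsx : s = L x := hLx.2 s hxs
    rw [← hsx]
    exact hslim
  · -- nonneg
    intro x hx
    exact le_trans (mul_nonneg ha₀.le (hs₀.nonneg x hx)) (hLS x hx).1
  · -- additivity
    intro x hx y hy
    have h1 := (hLspec x hx).1
    have h2 := (hLspec y hy).1
    have h3 : (x + y, L x + L y) ∈ Λm := by
      have := hΛmcone _ h1 _ h2 1 1 zero_le_one zero_le_one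
      simpa using this
    exact ((hLspec (x + y) (haddV x hx y hy)).2 _ h3).symm
  · -- homogeneity
    intro x hx a ha
    have h1 := (hLspec x hx).1
    have h3 : (a • x, a * L x) ∈ Λm := by
      have := hΛmcone _ h1 _ h1 a 0 ha le_rfl
      simpa [smul_eq_mul] using this
    exact ((hLspec (a • x) (hconeV x hx a ha)).2 _ h3).symm
  · -- positivity
    intro x hx hx0
    exact lt_of_lt_of_le (mul_pos ha₀ (hs₀.pos x hx hx0)) (hLS x hx).1
  · -- invariance of the section
    intro g x hx
    obtain ⟨hxV, hx1⟩ := hx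
    have h1 := (hLspec x hxV).1
    have h2 : (τ g x, L x) ∈ Λm := hΛminv g h1
    refine ⟨hrep.mapsTo g hxV, ?_⟩
    have h4 := (hLspec (τ g x) (hrep.mapsTo g hxV)).2 _ h2
    rw [← h4, hx1]
end

section
/- Let Y and Z be compact Hausdorff spaces with continuous actions of a topological group G, let φ : Y → Z be a continuous G-equivariant surjection, let σ_Z be a multiplier of the action on Z, and define its pullback σ_Y(g,y) := σ_Z(g, φ(y)). If σ_Y is a trivial multiplier on Y and the action of G on Y is proximal, then σ_Z is a trivial multiplier on Z. -/
/-- Let `Y` and `Z` be compact Hausdorff spaces with continuous actions of a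
topological group `G`, let `φ : Y → Z` be a continuous `G`-equivariant surjection, let `σ_Z`
be a multiplier of the action on `Z`, and let `σ_Y(g,y) := σ_Z(g, φ(y))` be its pullback.
If `σ_Y` is a trivial multiplier on `Y` and the action of `G` on `Y` is proximal, then `σ_Z`
is a trivial multiplier on `Z`. -/
theorem stmt_18 {G Y Z : Type*} [Group G] [TopologicalSpace G] [IsTopologicalGroup G]
    [TopologicalSpace Y] [CompactSpace Y] [T2Space Y]
    [TopologicalSpace Z] [CompactSpace Z] [T2Space Z]
    [MulAction G Y] [ContinuousSMul G Y]
    [MulAction G Z] [ContinuousSMul G Z]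
    -- `φ` is a continuous `G`-equivariant surjection
    (φ : Y → Z) (hφcont : Continuous φ) (hφsurj : Function.Surjective φ)
    (hφequiv : ∀ (g : G) (y : Y), φ (g • y) = g • φ y)
    -- `σ_Z` is a multiplier of the action on `Z`
    (σZ : G → Z → ℝ)
    (hσcont : Continuous fun p : G × Z => σZ p.1 p.2)
    (hσpos : ∀ (g : G) (z : Z), 0 < σZ g z)
    (hσmult : ∀ (g γ : G) (z : Z), σZ (g * γ) z = σZ g (γ • z) * σZ γ z)
    -- the pullback `σ_Y(g,y) = σ_Z(g, φ(y))` is a trivial multiplier on `Y`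
    (h : Y → ℝ) (hhcont : Continuous h) (hhpos : ∀ y : Y, 0 < h y)
    (htrivY : ∀ (g : G) (y : Y), σZ g (φ y) = h (g • y) / h y)
    -- the action of `G` on `Y` is proximal
    (hprox : ∀ y₁ y₂ : Y,
      ∃ p ∈ closure {p : Y × Y | ∃ g : G, p = (g • y₁, g • y₂)}, p.1 = p.2) :
    ∃ f : Z → ℝ, Continuous f ∧ (∀ z : Z, 0 < f z) ∧
      ∀ (g : G) (z : Z), σZ g z = f (g • z) / f z := by
  classical
  -- descent: h is constant on fibers of φ
  have key : ∀ y₁ y₂ : Y, φ y₁ = φ y₂ → h y₁ = h y₂ := by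
    intro y₁ y₂ hφeq
    obtain ⟨p, hp, hdiag⟩ := hprox y₁ y₂
    have hF : ∀ q ∈ closure {p : Y × Y | ∃ g : G, p = (g • y₁, g • y₂)},
        h q.1 * h y₂ - h q.2 * h y₁ = 0 := by
      have hcl : IsClosed {q : Y × Y | h q.1 * h y₂ - h q.2 * h y₁ = 0} :=
        isClosed_eq (by continuity) continuous_const
      intro q hq
      refine hcl.closure_subset ((closure_mono ?_) hq)
      rintro q ⟨g, rfl⟩
      have h1 : h (g • y₁) = σZ g (φ y₁) * h y₁ := by
        rw [htrivY g y₁]; field_simp [(hhpos y₁).ne']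
      have h2 : h (g • y₂) = σZ g (φ y₁) * h y₂ := by
        rw [hφeq, htrivY g y₂]; field_simp [(hhpos y₂).ne']
      simp only [Set.mem_setOf_eq, h1, h2]; ring
    have := hF p hp
    rw [hdiag] at this
    have hp2 := (hhpos p.2).ne'
    nlinarith [hhpos p.2]
  -- build f
  have hsurj' := hφsurj
  choose s hs using hφsurj
  refine ⟨fun z => h (s z), ?_, fun z => hhpos _, ?_⟩
  · have hquot := hφcont.isClosedMap.isQuotientMap hφcont hsurj'
    rw [hquot.continuous_iff]
    have : (fun z => h (s z)) ∘ φ = h := by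
      funext y; exact key _ _ (hs (φ y))
    rw [this]; exact hhcont
  · intro g z
    have h1 : φ (g • s z) = g • z := by rw [hφequiv, hs]
    have h2 : h (s (g • z)) = h (g • s z) := key _ _ (by rw [hs, h1])
    calc σZ g z = σZ g (φ (s z)) := by rw [hs]
    _ = h (g • s z) / h (s z) := htrivY g (s z)
    _ = h (s (g • z)) / h (s z) := by rw [h2]
end

section
/- Let Y be a compact Hausdorff space and let M(Y) be the cone of finite nonnegative regular Borel measures on Y with the weak-* topology. Let L : M(Y) → ℝ≥0 be a continuous function that is additive and positively homogeneous and satisfies L(μ) > 0 for every nonzero μ ∈ M(Y). Then there exists a strictly positive continuous function f : Y → ℝ>0 such that L(μ) = ∫_Y f dμ for all μ ∈ M(Y). -/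
open MeasureTheory
open scoped NNReal

section Stmt19Aux

open Set Filter
open scoped ENNReal Topology BoundedContinuousFunction

namespace Stmt19Aux

lemma nnreal_smul_measure {α : Type*} [MeasurableSpace α] (c : ℝ≥0) (ν : Measure α) :
    c • ν = (c : ℝ≥0∞) • ν := by
  ext s hs
  rw [ENNReal.smul_def]

lemma regular_add {α : Type*} [MeasurableSpace α] [TopologicalSpace α] (μ ν : Measure α) [IsFiniteMeasure μ] [IsFiniteMeasure ν]
    [μ.Regular] [ν.Regular] : (μ + ν).Regular := by
  have hout : (μ + ν).OuterRegular := by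
    constructor
    intro A hA r hr
    rcases eq_or_ne r ⊤ with rfl | hrt
    · exact ⟨univ, subset_univ A, isOpen_univ,
        (measure_lt_top (μ + ν) univ).trans_le le_top |>.trans_le le_rfl |>.trans_le le_rfl
          |>.trans_le le_rfl |>.trans_le le_rfl |>.trans_le le_rfl |>.trans_le le_rfl⟩
    · set a := (μ + ν) A with ha_def
      have ha : a ≠ ⊤ := measure_ne_top _ _
      set ε : ℝ≥0∞ := (r - a) / 2 with hε_def
      have hra : a < r := hr
      have hε0 : ε ≠ 0 := by
        rw [hε_def]
        simp only [ne_eq, ENNReal.div_eq_zero_iff, tsub_eq_zero_iff_le, not_or]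
        exact ⟨fun h => absurd h (not_le.mpr hra), by norm_num⟩
      obtain ⟨U, hAU, hUo, hU⟩ := Set.exists_isOpen_lt_add A (measure_ne_top μ A) hε0
      obtain ⟨V, hAV, hVo, hV⟩ := Set.exists_isOpen_lt_add A (measure_ne_top ν A) hε0
      refine ⟨U ∩ V, subset_inter hAU hAV, hUo.inter hVo, ?_⟩
      have h1 : (μ + ν) (U ∩ V) ≤ μ U + ν V := by
        rw [Measure.add_apply]
        exact add_le_add (measure_mono inter_subset_left) (measure_mono inter_subset_right)
      have h2 : μ U + ν V < (μ A + ε) + (ν A + ε) := ENNReal.add_lt_add hU hV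
      have h3 : (μ A + ε) + (ν A + ε) = a + (ε + ε) := by
        rw [ha_def, Measure.add_apply]; ring
      have h4 : ε + ε = r - a := by
        rw [hε_def, ENNReal.add_halves]
      have h5 : a + (r - a) = r := add_tsub_cancel_of_le hra.le
      calc (μ + ν) (U ∩ V) ≤ μ U + ν V := h1
        _ < (μ A + ε) + (ν A + ε) := h2
        _ = r := by rw [h3, h4, h5]
  have hinner : (μ + ν).InnerRegularWRT IsCompact IsOpen := by
    intro U hU r hr
    rw [Measure.add_apply] at hr
    rcases eq_or_ne (μ U) 0 with h0 | h0
    · have hr' : r < ν U := by simpa [h0] using hr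
      obtain ⟨K, hKU, hKc, hK⟩ := Measure.Regular.innerRegular (μ := ν) hU r hr'
      refine ⟨K, hKU, hKc, ?_⟩
      rw [Measure.add_apply]
      exact hK.trans_le le_add_self
    rcases eq_or_ne (ν U) 0 with h0' | h0'
    · have hr' : r < μ U := by simpa [h0'] using hr
      obtain ⟨K, hKU, hKc, hK⟩ := Measure.Regular.innerRegular (μ := μ) hU r hr'
      refine ⟨K, hKU, hKc, ?_⟩
      rw [Measure.add_apply]
      exact hK.trans_le le_self_add
    obtain ⟨r₁, hr₁, r₂, hr₂, hrr⟩ := ENNReal.exists_lt_add_of_lt_add hr h0 h0'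
    obtain ⟨K₁, hK₁U, hK₁c, hK₁⟩ := Measure.Regular.innerRegular (μ := μ) hU r₁ hr₁
    obtain ⟨K₂, hK₂U, hK₂c, hK₂⟩ := Measure.Regular.innerRegular (μ := ν) hU r₂ hr₂
    refine ⟨K₁ ∪ K₂, union_subset hK₁U hK₂U, hK₁c.union hK₂c, ?_⟩
    rw [Measure.add_apply]
    calc r < r₁ + r₂ := hrr
      _ ≤ μ (K₁ ∪ K₂) + ν (K₁ ∪ K₂) :=
        add_le_add (hK₁.le.trans (measure_mono subset_union_left))
          (hK₂.le.trans (measure_mono subset_union_right))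
  exact ⟨hinner⟩

lemma regular_dirac {α : Type*} [MeasurableSpace α] [TopologicalSpace α] [T1Space α] [OpensMeasurableSpace α] (y : α) :
    (Measure.dirac y).Regular := by
  have hout : (Measure.dirac y).OuterRegular := by
    constructor
    intro A hA r hr
    by_cases hy : y ∈ A
    · refine ⟨univ, subset_univ A, isOpen_univ, ?_⟩
      have h1 : Measure.dirac y A = 1 := by simp [Measure.dirac_apply, hy]
      have h2 : Measure.dirac y univ = 1 := by simp
      rw [h2, ← h1]; exact hr
    · refine ⟨{y}ᶜ, subset_compl_singleton_iff.mpr hy, isClosed_singleton.isOpen_compl, ?_⟩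
      have h1 : Measure.dirac y {y}ᶜ = 0 := by simp [Measure.dirac_apply]
      have h2 : (0 : ℝ≥0∞) ≤ Measure.dirac y A := zero_le
      rw [h1]
      exact lt_of_le_of_lt h2 hr
  have hinner : (Measure.dirac y).InnerRegularWRT IsCompact IsOpen := by
    intro U hU r hr
    have hyU : y ∈ U := by
      by_contra hy
      rw [Measure.dirac_apply' y hU.measurableSet, indicator_of_notMem hy] at hr
      exact (not_lt_of_ge (zero_le : (0:ℝ≥0∞) ≤ r)) hr
    refine ⟨{y}, singleton_subset_iff.mpr hyU, isCompact_singleton, ?_⟩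
    have h1 : Measure.dirac y {y} = 1 := by simp
    have h2 : Measure.dirac y U ≤ 1 := by
      rw [show (1:ℝ≥0∞) = Measure.dirac y univ by simp]
      exact measure_mono (subset_univ U)
    rw [h1]
    exact lt_of_lt_of_le hr h2
  exact ⟨hinner⟩

lemma exists_discrete_approx {Y : Type*} [TopologicalSpace Y] [CompactSpace Y]
    [MeasurableSpace Y] [OpensMeasurableSpace Y]
    (μ : Measure Y) [IsFiniteMeasure μ] (F : Finset (Y →ᵇ ℝ≥0)) {δ : ℝ≥0} (hδ : 0 < δ) :
    ∃ (m : ℕ) (c : Fin m → ℝ≥0) (t : Fin m → Y),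
      ∀ g ∈ F,
        ∫⁻ x, (g x : ℝ≥0∞) ∂(∑ i : Fin m, c i • Measure.dirac (t i))
            ≤ ∫⁻ x, (g x : ℝ≥0∞) ∂μ + (δ : ℝ≥0∞) * μ univ ∧
        ∫⁻ x, (g x : ℝ≥0∞) ∂μ
            ≤ ∫⁻ x, (g x : ℝ≥0∞) ∂(∑ i : Fin m, c i • Measure.dirac (t i))
              + (δ : ℝ≥0∞) * μ univ := by
  classical
  rcases isEmpty_or_nonempty Y with hY | hY
  · refine ⟨0, Fin.elim0, Fin.elim0, fun g hg => ?_⟩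
    have hμ0 : μ = 0 := by
      ext s hs
      rw [Set.eq_empty_of_isEmpty s]
      simp
    simp [hμ0]
  -- the open sets on which all test functions oscillate less than δ
  set U : Y → Set Y := fun y => {x | ∀ g ∈ F, dist (g x) (g y) < (δ : ℝ)} with hUdef
  have hUopen : ∀ y, IsOpen (U y) := by
    intro y
    have : U y = ⋂ g ∈ F, {x | dist (g x) (g y) < (δ : ℝ)} := by
      ext x; simp [hUdef]
    rw [this]
    exact isOpen_biInter_finset fun g _ =>
      isOpen_lt (g.continuous.dist continuous_const) continuous_const
  have hUself : ∀ y, y ∈ U y := fun y g _ => by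
    simpa [dist_self] using (NNReal.coe_pos.mpr hδ)
  obtain ⟨t₀, ht₀⟩ := isCompact_univ.elim_finite_subcover U hUopen
    (fun x _ => mem_iUnion.mpr ⟨x, hUself x⟩)
  set l : List Y := t₀.toList with hl
  set m : ℕ := l.length with hm
  set yfun : ℕ → Y := fun i => l.getD i hY.some with hyfun
  set V : ℕ → Set Y := fun i => if i < m then U (yfun i) else ∅ with hV
  have hVopen : ∀ i, IsOpen (V i) := by
    intro i
    rw [hV]
    by_cases h : i < m <;> simp [h, hUopen]
  have hVcover : (⋃ i, V i) = univ := by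
    apply eq_univ_of_forall
    intro x
    have hx := ht₀ (mem_univ x)
    rw [mem_iUnion₂] at hx
    obtain ⟨y, hyt, hxy⟩ := hx
    have hyl : y ∈ l := (Finset.mem_toList).mpr hyt
    obtain ⟨j, hj, hjy⟩ := List.getElem_of_mem hyl
    refine mem_iUnion.mpr ⟨j, ?_⟩
    have : yfun j = y := by
      rw [hyfun]
      simp only []
      rw [List.getD_eq_getElem l hY.some hj, hjy]
    rw [hV]
    simp only [hm] at hj ⊢
    rw [if_pos hj, this]
    exact hxy
  set E : ℕ → Set Y := disjointed V with hE
  have hEmeas : ∀ i, MeasurableSet (E i) :=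
    MeasurableSet.disjointed fun i => (hVopen i).measurableSet
  have hEdisj : Pairwise (Function.onFun Disjoint E) := disjoint_disjointed V
  have hEsub : ∀ i, E i ⊆ V i := disjointed_subset V
  have hEcover : (⋃ i, E i) = univ := by rw [hE, iUnion_disjointed, hVcover]
  have hEempty : ∀ i, ¬ i < m → E i = ∅ := by
    intro i hi
    have := hEsub i
    rw [hV] at this
    simp only [if_neg hi] at this
    exact subset_empty_iff.mp this
  refine ⟨m, fun i => (μ (E i.1)).toNNReal, fun i => yfun i.1, ?_⟩
  intro g hg
  set ν : Measure Y := ∑ i : Fin m, ((μ (E i.1)).toNNReal : ℝ≥0) • Measure.dirac (yfun i.1)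
    with hν
  have hgmeas : Measurable fun x => (g x : ℝ≥0∞) :=
    (ENNReal.continuous_coe.comp g.continuous).measurable
  -- lintegral with respect to ν
  have hν_int : ∫⁻ x, (g x : ℝ≥0∞) ∂ν
      = ∑ i ∈ Finset.range m, μ (E i) * (g (yfun i) : ℝ≥0∞) := by
    rw [hν, lintegral_finset_sum_measure]
    rw [← Fin.sum_univ_eq_sum_range (fun i => μ (E i) * (g (yfun i) : ℝ≥0∞)) m]
    refine Finset.sum_congr rfl fun i _ => ?_
    rw [nnreal_smul_measure, lintegral_smul_measure, lintegral_dirac' _ hgmeas,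
      ENNReal.coe_toNNReal (measure_ne_top μ _), smul_eq_mul]
  -- lintegral with respect to μ, decomposed along the partition
  have hμ_int : ∫⁻ x, (g x : ℝ≥0∞) ∂μ
      = ∑ i ∈ Finset.range m, ∫⁻ x in E i, (g x : ℝ≥0∞) ∂μ := by
    have h1 : ∫⁻ x, (g x : ℝ≥0∞) ∂μ = ∫⁻ x in ⋃ i, E i, (g x : ℝ≥0∞) ∂μ := by
      rw [hEcover, Measure.restrict_univ]
    rw [h1, lintegral_iUnion hEmeas hEdisj]
    refine (tsum_eq_sum fun i hi => ?_)
    rw [hEempty i (by simpa using hi)]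
    simp
  have hμuniv : μ univ = ∑ i ∈ Finset.range m, μ (E i) := by
    conv_lhs => rw [← hEcover]
    rw [measure_iUnion hEdisj hEmeas]
    refine (tsum_eq_sum fun i hi => ?_)
    rw [hEempty i (by simpa using hi)]
    simp
  -- pointwise bounds on each piece
  have hpt : ∀ i < m, ∀ x ∈ E i,
      (g x : ℝ≥0∞) ≤ (g (yfun i) : ℝ≥0∞) + δ ∧
      (g (yfun i) : ℝ≥0∞) ≤ (g x : ℝ≥0∞) + δ := by
    intro i hi x hx
    have hxV := hEsub i hx
    rw [hV] at hxV
    simp only [if_pos hi] at hxV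
    have hd : dist (g x) (g (yfun i)) < (δ : ℝ) := hxV g hg
    rw [NNReal.dist_eq, abs_lt] at hd
    constructor
    · rw [← ENNReal.coe_add, ENNReal.coe_le_coe, ← NNReal.coe_le_coe]
      push_cast
      linarith [hd.1, hd.2]
    · rw [← ENNReal.coe_add, ENNReal.coe_le_coe, ← NNReal.coe_le_coe]
      push_cast
      linarith [hd.1, hd.2]
  constructor
  · -- upper bound for ν-integral
    rw [hν_int, hμ_int, hμuniv, Finset.mul_sum, ← Finset.sum_add_distrib]
    refine Finset.sum_le_sum fun i hi => ?_
    have him : i < m := Finset.mem_range.mp hi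
    calc μ (E i) * (g (yfun i) : ℝ≥0∞)
        = ∫⁻ _ in E i, (g (yfun i) : ℝ≥0∞) ∂μ := by
          rw [setLIntegral_const, mul_comm]
      _ ≤ ∫⁻ x in E i, ((g x : ℝ≥0∞) + δ) ∂μ := by
          refine setLIntegral_mono' (hEmeas i) fun x hx => ?_
          exact (hpt i him x hx).2
      _ = ∫⁻ x in E i, (g x : ℝ≥0∞) ∂μ + (δ : ℝ≥0∞) * μ (E i) := by
          rw [lintegral_add_right _ measurable_const, setLIntegral_const]
  · -- lower bound
    rw [hν_int, hμ_int, hμuniv, Finset.mul_sum, ← Finset.sum_add_distrib]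
    refine Finset.sum_le_sum fun i hi => ?_
    have him : i < m := Finset.mem_range.mp hi
    calc ∫⁻ x in E i, (g x : ℝ≥0∞) ∂μ
        ≤ ∫⁻ x in E i, ((g (yfun i) : ℝ≥0∞) + δ) ∂μ := by
          refine setLIntegral_mono' (hEmeas i) fun x hx => ?_
          exact (hpt i him x hx).1
      _ = μ (E i) * (g (yfun i) : ℝ≥0∞) + (δ : ℝ≥0∞) * μ (E i) := by
          rw [setLIntegral_const]
          ring

end Stmt19Aux

end Stmt19Aux

open Set Filter
open scoped ENNReal Topology BoundedContinuousFunction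

/-- Let `Y` be a compact Hausdorff space and let `M(Y)` be the cone of
finite nonnegative regular Borel measures on `Y` with the weak-* topology.  Let
`L : M(Y) → ℝ≥0` be a continuous function that is additive and positively homogeneous and
satisfies `L(μ) > 0` for every nonzero `μ ∈ M(Y)`.  Then there exists a strictly positive
continuous function `f : Y → ℝ>0` such that `L(μ) = ∫_Y f dμ` for all `μ ∈ M(Y)`. -/
theorem stmt_19 {Y : Type*} [TopologicalSpace Y] [CompactSpace Y] [T2Space Y]
    [MeasurableSpace Y] [BorelSpace Y]
    -- `M(Y)`: the regular members of the cone of finite Borel measures with the weak-* topology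
    (R : Set (FiniteMeasure Y)) (hR : R = {μ : FiniteMeasure Y | (μ : Measure Y).Regular})
    (L : FiniteMeasure Y → ℝ)
    (hLcont : ContinuousOn L R)
    (hLnonneg : ∀ μ ∈ R, 0 ≤ L μ)
    (hLadd : ∀ μ ∈ R, ∀ ν ∈ R, L (μ + ν) = L μ + L ν)
    (hLsmul : ∀ μ ∈ R, ∀ c : ℝ≥0, L (c • μ) = (c : ℝ) * L μ)
    (hLpos : ∀ μ ∈ R, μ ≠ 0 → 0 < L μ) :
    ∃ f : Y → ℝ, Continuous f ∧ (∀ y : Y, 0 < f y) ∧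
      ∀ μ ∈ R, L μ = ∫ y, f y ∂(μ : Measure Y) := by
  classical
  set d : Y → FiniteMeasure Y := fun y => ⟨Measure.dirac y, inferInstance⟩ with hd
  have hd_coe : ∀ y, (d y : Measure Y) = Measure.dirac y := fun _ => rfl
  have hdR : ∀ y, d y ∈ R := by
    intro y
    rw [hR, Set.mem_setOf_eq, hd_coe y]
    exact Stmt19Aux.regular_dirac y
  have hd_cont : Continuous d := by
    rw [continuous_iff_continuousAt]
    intro y
    have : Tendsto d (𝓝 y) (𝓝 (d y)) := by
      rw [FiniteMeasure.tendsto_iff_forall_lintegral_tendsto]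
      intro g
      have hgmeas : Measurable fun x => (g x : ℝ≥0∞) :=
        (ENNReal.continuous_coe.comp g.continuous).measurable
      simp only [hd_coe, lintegral_dirac' _ hgmeas]
      exact ((ENNReal.continuous_coe.comp g.continuous).tendsto y)
    exact this
  set f : Y → ℝ := fun y => L (d y) with hf
  have hf_cont : Continuous f := hLcont.comp_continuous hd_cont hdR
  have hf_pos : ∀ y, 0 < f y := by
    intro y
    refine hLpos _ (hdR y) ?_
    intro h0
    have h1 : (d y : Measure Y) Set.univ = ((0 : FiniteMeasure Y) : Measure Y) Set.univ := by
      rw [h0]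
    rw [hd_coe, FiniteMeasure.toMeasure_zero] at h1
    simp at h1
  refine ⟨f, hf_cont, hf_pos, ?_⟩
  set fB : Y →ᵇ ℝ := BoundedContinuousFunction.mkOfCompact ⟨f, hf_cont⟩ with hfB
  have h0R : (0 : FiniteMeasure Y) ∈ R := by
    rw [hR, Set.mem_setOf_eq, FiniteMeasure.toMeasure_zero]
    infer_instance
  have hL0 : L 0 = 0 := by
    have h := hLsmul 0 h0R 0
    rwa [smul_zero, NNReal.coe_zero, zero_mul] at h
  have hRadd : ∀ μ' ∈ R, ∀ ν' ∈ R, μ' + ν' ∈ R := by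
    intro μ' hμ' ν' hν'
    rw [hR, Set.mem_setOf_eq] at hμ' hν' ⊢
    rw [FiniteMeasure.toMeasure_add]
    haveI := hμ'; haveI := hν'
    exact Stmt19Aux.regular_add _ _
  have hRsmul : ∀ μ' ∈ R, ∀ c : ℝ≥0, c • μ' ∈ R := by
    intro μ' hμ' c
    rw [hR, Set.mem_setOf_eq] at hμ' ⊢
    rw [FiniteMeasure.toMeasure_smul]
    haveI := hμ'
    infer_instance
  have key : ∀ (m : ℕ) (c : Fin m → ℝ≥0) (t : Fin m → Y),
      (∑ i : Fin m, c i • d (t i)) ∈ R ∧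
      L (∑ i : Fin m, c i • d (t i)) = ∑ i : Fin m, (c i : ℝ) * f (t i) := by
    intro m c t
    have haux : ∀ s : Finset (Fin m), (∑ i ∈ s, c i • d (t i)) ∈ R ∧
        L (∑ i ∈ s, c i • d (t i)) = ∑ i ∈ s, (c i : ℝ) * f (t i) := by
      intro s
      induction s using Finset.cons_induction with
      | empty => simpa using ⟨h0R, hL0⟩
      | cons a s ha ih =>
        simp only [Finset.sum_cons]
        have hmem : c a • d (t a) ∈ R := hRsmul _ (hdR _) _
        refine ⟨hRadd _ hmem _ ih.1, ?_⟩
        rw [hLadd _ hmem _ ih.1, hLsmul _ (hdR _) _, ih.2]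
    exact haux Finset.univ
  have hcoe_sum : ∀ (m : ℕ) (c : Fin m → ℝ≥0) (t : Fin m → Y),
      ((∑ i : Fin m, c i • d (t i) : FiniteMeasure Y) : Measure Y)
        = ∑ i : Fin m, c i • Measure.dirac (t i) := by
    intro m c t
    have haux : ∀ s : Finset (Fin m),
        ((∑ i ∈ s, c i • d (t i) : FiniteMeasure Y) : Measure Y)
          = ∑ i ∈ s, c i • Measure.dirac (t i) := by
      intro s
      induction s using Finset.cons_induction with
      | empty => simp
      | cons a s ha ih =>
        simp only [Finset.sum_cons]
        rw [FiniteMeasure.toMeasure_add,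
          FiniteMeasure.toMeasure_smul, ih, hd_coe]
    exact haux Finset.univ
  have hint_sum : ∀ (m : ℕ) (c : Fin m → ℝ≥0) (t : Fin m → Y),
      ∫ y, f y ∂((∑ i : Fin m, c i • d (t i) : FiniteMeasure Y) : Measure Y)
        = ∑ i : Fin m, (c i : ℝ) * f (t i) := by
    intro m c t
    rw [hcoe_sum]
    rw [MeasureTheory.integral_finset_sum_measure (fun i _ => ?_)]
    · refine Finset.sum_congr rfl fun i _ => ?_
      rw [Stmt19Aux.nnreal_smul_measure, integral_smul_measure, MeasureTheory.integral_dirac]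
      simp [smul_eq_mul]
    · -- integrability
      rw [Stmt19Aux.nnreal_smul_measure]
      haveI : IsFiniteMeasure ((c i : ℝ≥0∞) • Measure.dirac (t i)) := by
        refine ⟨?_⟩
        rw [Measure.smul_apply, smul_eq_mul]
        exact ENNReal.mul_lt_top ENNReal.coe_lt_top (by simp)
      exact fB.integrable _
  intro μ hμ
  have H : ∀ p : Finset (Y →ᵇ ℝ≥0) × ℕ, ∃ ν : FiniteMeasure Y,
      ν ∈ R ∧ L ν = ∫ y, f y ∂(ν : Measure Y) ∧
      ∀ g ∈ p.1,
        ∫⁻ x, (g x : ℝ≥0∞) ∂(ν : Measure Y)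
            ≤ ∫⁻ x, (g x : ℝ≥0∞) ∂(μ : Measure Y)
              + ((((p.2 : ℝ≥0) + 1)⁻¹ : ℝ≥0) : ℝ≥0∞) * (μ : Measure Y) Set.univ ∧
        ∫⁻ x, (g x : ℝ≥0∞) ∂(μ : Measure Y)
            ≤ ∫⁻ x, (g x : ℝ≥0∞) ∂(ν : Measure Y)
              + ((((p.2 : ℝ≥0) + 1)⁻¹ : ℝ≥0) : ℝ≥0∞) * (μ : Measure Y) Set.univ := by
    intro p
    obtain ⟨m, c, t, hmct⟩ := Stmt19Aux.exists_discrete_approx (μ : Measure Y) p.1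
      (δ := ((p.2 : ℝ≥0) + 1)⁻¹) (by positivity)
    refine ⟨∑ i : Fin m, c i • d (t i), (key m c t).1, ?_, ?_⟩
    · rw [(key m c t).2, hint_sum]
    · intro g hg
      rw [hcoe_sum]
      exact hmct g hg
  choose ν hνR hνL hνapx using H
  have herr : Tendsto (fun p : Finset (Y →ᵇ ℝ≥0) × ℕ =>
      ((((p.2 : ℝ≥0) + 1)⁻¹ : ℝ≥0) : ℝ≥0∞) * (μ : Measure Y) Set.univ) atTop (𝓝 0) := by
    have h2 : Tendsto (fun n : ℕ => (((n : ℝ≥0) + 1)⁻¹ : ℝ≥0)) atTop (𝓝 0) := by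
      rw [← NNReal.tendsto_coe]
      have := tendsto_one_div_add_atTop_nhds_zero_nat (𝕜 := ℝ)
      refine this.congr fun n => ?_
      push_cast
      rw [one_div]
    have h1 : Tendsto (fun n : ℕ => ((((n : ℝ≥0) + 1)⁻¹ : ℝ≥0) : ℝ≥0∞) * (μ : Measure Y) Set.univ)
        atTop (𝓝 0) := by
      have := ENNReal.Tendsto.mul_const (ENNReal.tendsto_coe.mpr h2)
        (Or.inr (measure_ne_top (μ : Measure Y) Set.univ))
      simpa using this
    have hsnd : Tendsto (fun p : Finset (Y →ᵇ ℝ≥0) × ℕ => p.2) atTop atTop := by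
      rw [← Filter.prod_atTop_atTop_eq]
      exact tendsto_snd
    exact h1.comp hsnd
  have htend : Tendsto ν atTop (𝓝 μ) := by
    rw [FiniteMeasure.tendsto_iff_forall_lintegral_tendsto]
    intro g
    have hev : ∀ᶠ p : Finset (Y →ᵇ ℝ≥0) × ℕ in atTop, g ∈ p.1 := by
      refine eventually_atTop.mpr ⟨({g}, 0), fun p hp => ?_⟩
      exact hp.1 (Finset.mem_singleton_self g)
    set a := ∫⁻ x, (g x : ℝ≥0∞) ∂(μ : Measure Y) with ha
    refine tendsto_of_tendsto_of_tendsto_of_le_of_le'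
      (g := fun p : Finset (Y →ᵇ ℝ≥0) × ℕ =>
        a - ((((p.2 : ℝ≥0) + 1)⁻¹ : ℝ≥0) : ℝ≥0∞) * (μ : Measure Y) Set.univ)
      (h := fun p : Finset (Y →ᵇ ℝ≥0) × ℕ =>
        a + ((((p.2 : ℝ≥0) + 1)⁻¹ : ℝ≥0) : ℝ≥0∞) * (μ : Measure Y) Set.univ)
      ?_ ?_ ?_ ?_
    · have := ENNReal.Tendsto.sub (tendsto_const_nhds (x := a)) herr
        (Or.inr (by simp : (0:ℝ≥0∞) ≠ ⊤))
      simpa using this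
    · have := Tendsto.add (tendsto_const_nhds (x := a)) herr
      simpa using this
    · filter_upwards [hev] with p hp
      exact tsub_le_iff_right.mpr (hνapx p g hp).2
    · filter_upwards [hev] with p hp
      exact (hνapx p g hp).1
  have htendR : Tendsto ν atTop (𝓝[R] μ) :=
    tendsto_nhdsWithin_iff.mpr ⟨htend, Eventually.of_forall hνR⟩
  have h1 : Tendsto (fun p => L (ν p)) atTop (𝓝 (L μ)) :=
    Filter.Tendsto.comp (hLcont μ hμ) htendR
  have h2 : Tendsto (fun p => ∫ y, f y ∂(ν p : Measure Y)) atTop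
      (𝓝 (∫ y, f y ∂(μ : Measure Y))) :=
    FiniteMeasure.tendsto_iff_forall_integral_tendsto.mp htend fB
  have h3 : (fun p => L (ν p)) = fun p => ∫ y, f y ∂(ν p : Measure Y) :=
    funext fun p => hνL p
  rw [h3] at h1
  exact tendsto_nhds_unique h1 h2
end
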